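/- Let L be a Lie algebra over a field k and R : L → L a linear map satisfying [R(x),R(y)] = R([R(x),y] + [x,R(y)] + [x,y]) for all x,y ∈ L (a Rota–Baxter operator of weight 1). Then L equipped with the original bracket [,] and the product x·y := [R(x),y] is a post-Lie algebra: the identities (x·y)·z − x·(y·z) − (y·x)·z + y·(x·z) = [y,x]·z and x·[y,z] = [x·y,z] + [y,x·z] hold for all x,y,z ∈ L. -/
import Mathlib


/-- A Rota–Baxter operator of weight 1 on a Lie algebra induces a post-Lie structure with
`x·y = [R x, y]` and the original bracket. -/
theorem rb_weight_one_gives_postLie {k : Type*} [Field k] {L : Type*} [LieRing L]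
    [LieAlgebra k L] (R : L →ₗ[k] L)
    (hRB : ∀ x y : L, ⁅R x, R y⁆ = R (⁅R x, y⁆ + ⁅x, R y⁆ + ⁅x, y⁆)) :
    (∀ x y z : L,
      ⁅R ⁅R x, y⁆, z⁆ - ⁅R x, ⁅R y, z⁆⁆ - ⁅R ⁅R y, x⁆, z⁆ + ⁅R y, ⁅R x, z⁆⁆
        = ⁅R ⁅y, x⁆, z⁆) ∧
    (∀ x y z : L, ⁅R x, ⁅y, z⁆⁆ = ⁅⁅R x, y⁆, z⁆ + ⁅y, ⁅R x, z⁆⁆) := by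
  constructor
  · intro x y z
    have h1 : R ⁅R x, y⁆ - R ⁅R y, x⁆ - R ⁅y, x⁆ = ⁅R x, R y⁆ := by
      rw [hRB x y, ← map_sub, ← map_sub]
      congr 1
      rw [← lie_skew (R y) x, ← lie_skew y x]
      abel
    have h2 : ⁅⁅R x, R y⁆, z⁆ = ⁅R x, ⁅R y, z⁆⁆ - ⁅R y, ⁅R x, z⁆⁆ := by
      rw [lie_lie]
    have h3 : ⁅R ⁅R x, y⁆ - R ⁅R y, x⁆ - R ⁅y, x⁆, z⁆ = ⁅R x, ⁅R y, z⁆⁆ - ⁅R y, ⁅R x, z⁆⁆ := by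
      rw [h1, h2]
    rw [sub_lie, sub_lie] at h3
    linear_combination (norm := abel) h3
  · intro x y z
    rw [leibniz_lie]
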